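/- Let (u_i)_{i≥0} be a strictly increasing arithmetic progression of positive integers, with common difference r and first term u_0 so u_i = u_0 + i·r, and let k ≥ 0 be an integer. Then (u_0·u_1···u_k) / (k! · gcd(u_0,u_1)^k) divides lcm(u_0, u_1, ..., u_k), in the sense that k! · gcd(u_0,u_1)^k · lcm(u_0,...,u_k) is divisible by u_0·u_1···u_k. -/

import Mathlib

open Finset

lemma frac_id (k : ℕ) : ∀ a s : ℚ, (∀ i : ℕ, i ≤ k → a + i * s ≠ 0) →
    ∑ i ∈ Finset.range (k+1), (-1 : ℚ)^i * (Nat.choose k i) / (a + i * s)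
      = (Nat.factorial k) * s^k / ∏ i ∈ Finset.range (k+1), (a + i * s) := by
  induction k with
  | zero => intro a s h; simp
  | succ k ih =>
    intro a s h
    have h0 : a ≠ 0 := by simpa using h 0 (by omega)
    have ha' : ∀ i : ℕ, i ≤ k → a + i * s ≠ 0 := fun i hi => h i (by omega)
    have hb' : ∀ i : ℕ, i ≤ k → (a + s) + i * s ≠ 0 := by
      intro i hi
      have := h (i+1) (by omega)
      push_cast at this ⊢
      intro hc; apply this; rw [← hc]; ring
    have hlast : a + ((k:ℚ)+1) * s ≠ 0 := by
      have := hb' k le_rfl; intro hc; apply this; rw [← hc]; ring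
    have hPa : (∏ i ∈ Finset.range (k+1), (a + i * s)) ≠ 0 :=
      Finset.prod_ne_zero_iff.2 fun i hi => ha' i (Nat.lt_succ_iff.mp (Finset.mem_range.mp hi))
    have hPb : (∏ i ∈ Finset.range (k+1), ((a + s) + i * s)) ≠ 0 :=
      Finset.prod_ne_zero_iff.2 fun i hi => hb' i (Nat.lt_succ_iff.mp (Finset.mem_range.mp hi))
    have hP : (∏ i ∈ Finset.range (k+2), (a + i * s)) ≠ 0 :=
      Finset.prod_ne_zero_iff.2 fun i hi => h i (Nat.lt_succ_iff.mp (Finset.mem_range.mp hi))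
    -- split the sum
    have e1 : ∑ i ∈ Finset.range (k+2), (-1 : ℚ)^i * (Nat.choose (k+1) i) / (a + i * s)
        = (∑ i ∈ Finset.range (k+1), (-1 : ℚ)^i * (Nat.choose k i) / (a + i * s))
          - ∑ i ∈ Finset.range (k+1), (-1 : ℚ)^i * (Nat.choose k i) / ((a + s) + i * s) := by
      rw [Finset.sum_range_succ']
      have hterm : ∀ i ∈ Finset.range (k+1),
          (-1 : ℚ)^(i+1) * (Nat.choose (k+1) (i+1)) / (a + (↑(i+1)) * s)
          = (-1 : ℚ)^(i+1) * (Nat.choose k (i+1)) / (a + (↑(i+1)) * s)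
            - (-1 : ℚ)^i * (Nat.choose k i) / ((a + s) + i * s) := by
        intro i hi
        have hne : a + (↑(i+1) : ℚ) * s ≠ 0 := by
          have := hb' i (Nat.lt_succ_iff.mp (Finset.mem_range.mp hi))
          intro hc; apply this; rw [← hc]; push_cast; ring
        have hne2 : (a + s) + (i : ℚ) * s ≠ 0 := hb' i (Nat.lt_succ_iff.mp (Finset.mem_range.mp hi))
        rw [Nat.choose_succ_succ']
        have : ((a:ℚ) + (↑(i+1)) * s) = (a + s) + i * s := by push_cast; ring
        rw [this]
        push_cast
        field_simp
        ring
      rw [Finset.sum_congr rfl hterm, Finset.sum_sub_distrib]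
      have hch : Nat.choose (k+1) 0 = Nat.choose k 0 := by simp
      rw [hch]
      have e2 : (∑ i ∈ Finset.range (k+1), (-1 : ℚ)^(i+1) * (Nat.choose k (i+1)) / (a + (↑(i+1)) * s))
            + (-1 : ℚ)^0 * (Nat.choose k 0) / (a + (0:ℕ) * s)
          = ∑ i ∈ Finset.range (k+1), (-1 : ℚ)^i * (Nat.choose k i) / (a + i * s) := by
        rw [← Finset.sum_range_succ' (fun i => (-1 : ℚ)^i * (Nat.choose k i) / (a + i * s)) (k+1),
          Finset.sum_range_succ]
        simp [Nat.choose_succ_self]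
      rw [sub_add_eq_add_sub, e2]
    rw [e1, ih a s ha', ih (a+s) s hb']
    have hP1 : (∏ i ∈ Finset.range (k+2), (a + i * s))
        = (∏ i ∈ Finset.range (k+1), (a + i * s)) * (a + ((k:ℚ)+1) * s) := by
      rw [Finset.prod_range_succ]; push_cast; ring
    have hP2 : (∏ i ∈ Finset.range (k+2), (a + i * s))
        = (∏ i ∈ Finset.range (k+1), ((a + s) + i * s)) * a := by
      rw [Finset.prod_range_succ' (fun i => a + i * s) (k+1)]
      have h1 : ∏ i ∈ Finset.range (k+1), (a + (↑(i+1) : ℚ) * s)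
          = ∏ i ∈ Finset.range (k+1), ((a + s) + (i : ℚ) * s) :=
        Finset.prod_congr rfl (fun i _ => by push_cast; ring)
      rw [h1]
      norm_num
    rw [div_sub_div _ _ hPa hPb, div_eq_div_iff (mul_ne_zero hPa hPb) hP]
    rw [Nat.factorial_succ]
    push_cast
    linear_combination (((Nat.factorial k : ℚ)) * s^k * (∏ i ∈ Finset.range (k+1), ((a + s) + i * s))) * hP1
      - (((Nat.factorial k : ℚ)) * s^k * (∏ i ∈ Finset.range (k+1), (a + i * s))) * hP2

lemma prodAP_dvd (a s k : ℕ) (ha : 0 < a) :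
    (∏ i ∈ Finset.range (k+1), (a + i * s)) ∣
      Nat.factorial k * s ^ k * (Finset.range (k+1)).lcm (fun i => a + i * s) := by
  set L := (Finset.range (k+1)).lcm (fun i => a + i * s) with hLdef
  have haq : (0:ℚ) < (a:ℚ) := by exact_mod_cast ha
  have hne : ∀ i : ℕ, i ≤ k → ((a:ℚ) + i * s) ≠ 0 := by
    intro i _
    have : (0:ℚ) < (a:ℚ) + i * s := by positivity
    exact this.ne'
  have hdvdL : ∀ i ∈ Finset.range (k+1), (a + i * s) ∣ L := fun i hi => Finset.dvd_lcm hi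
  have hid := frac_id k a s hne
  have hPq : (∏ i ∈ Finset.range (k+1), ((a:ℚ) + i * s)) ≠ 0 :=
    Finset.prod_ne_zero_iff.2 fun i hi => hne i (Nat.lt_succ_iff.mp (Finset.mem_range.mp hi))
  have hQ : ((Nat.factorial k : ℚ) * (s:ℚ)^k * L)
      = (∏ i ∈ Finset.range (k+1), ((a:ℚ) + i * s))
        * ∑ i ∈ Finset.range (k+1), (-1:ℚ)^i * (Nat.choose k i) * ((L / (a + i * s) : ℕ) : ℚ) := by
    have h1 : ∑ i ∈ Finset.range (k+1), (-1:ℚ)^i * (Nat.choose k i) * ((L / (a + i * s) : ℕ) : ℚ)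
        = (L:ℚ) * ∑ i ∈ Finset.range (k+1), (-1:ℚ)^i * (Nat.choose k i) / ((a:ℚ) + i * s) := by
      rw [Finset.mul_sum]
      refine Finset.sum_congr rfl fun i hi => ?_
      have hne' : ((a:ℚ) + i * s) ≠ 0 := hne i (Nat.lt_succ_iff.mp (Finset.mem_range.mp hi))
      have hc : ((L / (a + i * s) : ℕ) : ℚ) = (L:ℚ) / ((a:ℚ) + i * s) := by
        rw [Nat.cast_div (hdvdL i hi) (by push_cast; exact hne')]
        push_cast
        ring
      rw [hc]
      ring
    rw [h1, hid]
    field_simp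
    ring
  have hZ : ((Nat.factorial k * s^k * L : ℕ) : ℤ)
      = ((∏ i ∈ Finset.range (k+1), (a + i * s) : ℕ) : ℤ)
        * (∑ i ∈ Finset.range (k+1), (-1:ℤ)^i * (Nat.choose k i) * ((L / (a + i * s) : ℕ) : ℤ)) := by
    apply Int.cast_injective (α := ℚ)
    simp only [Int.cast_mul, Int.cast_add, Int.cast_sum, Int.cast_pow, Int.cast_neg, Int.cast_one,
      Int.cast_natCast, Int.cast_prod, Nat.cast_mul, Nat.cast_pow, Nat.cast_prod, Nat.cast_add]
    linear_combination hQ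
  have hdz : ((∏ i ∈ Finset.range (k+1), (a + i * s) : ℕ) : ℤ)
      ∣ ((Nat.factorial k * s^k * L : ℕ) : ℤ) := ⟨_, hZ⟩
  exact_mod_cast hdz

lemma finset_lcm_mul {β : Type*} [DecidableEq β] (d : ℕ) (s : Finset β) (f : β → ℕ)
    (hs : s.Nonempty) : s.lcm (fun i => d * f i) = d * s.lcm f := by
  induction hs using Finset.Nonempty.cons_induction with
  | singleton a => simp
  | cons a t ha ht ih =>
      rw [Finset.cons_eq_insert, Finset.lcm_insert, Finset.lcm_insert, ih]
      simpa using lcm_mul_left d (f a) (t.lcm f)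

theorem stmt5 (u₀ r k : ℕ) (hu : 0 < u₀) (hr : 0 < r) :
    (∏ i ∈ Finset.range (k+1), (u₀ + i * r)) ∣
      Nat.factorial k * (Nat.gcd u₀ (u₀ + r)) ^ k *
        (Finset.range (k+1)).lcm (fun i => u₀ + i * r) := by
  have hg : Nat.gcd u₀ (u₀ + r) = Nat.gcd u₀ r := by
    rw [add_comm u₀ r, Nat.gcd_add_self_right]
  set d := Nat.gcd u₀ r with hd
  have hdpos : 0 < d := Nat.gcd_pos_of_pos_left r hu
  set a := u₀ / d with hadef
  set s := r / d with hsdef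
  have hda : d * a = u₀ := Nat.mul_div_cancel' (Nat.gcd_dvd_left _ _)
  have hds : d * s = r := Nat.mul_div_cancel' (Nat.gcd_dvd_right _ _)
  have hapos : 0 < a := by
    rcases Nat.eq_zero_or_pos a with h | h
    · rw [h, mul_zero] at hda; omega
    · exact h
  have hspos : 0 < s := by
    rcases Nat.eq_zero_or_pos s with h | h
    · rw [h, mul_zero] at hds; omega
    · exact h
  have hcop : Nat.Coprime a s := Nat.coprime_div_gcd_div_gcd hdpos
  have hfun : (fun i => u₀ + i * r) = fun i => d * (a + i * s) := by
    funext i; rw [← hda, ← hds]; ring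
  rw [hg, hfun]
  have hprod : (∏ i ∈ Finset.range (k+1), (d * (a + i * s)))
      = d ^ (k+1) * ∏ i ∈ Finset.range (k+1), (a + i * s) := by
    rw [Finset.prod_mul_distrib, Finset.prod_const, Finset.card_range]
  have hlcm : (Finset.range (k+1)).lcm (fun i => d * (a + i * s))
      = d * (Finset.range (k+1)).lcm (fun i => a + i * s) :=
    finset_lcm_mul d _ _ (by simp)
  rw [hprod, hlcm]
  -- coprimality of the product with s^k
  have hcop2 : Nat.Coprime (∏ i ∈ Finset.range (k+1), (a + i * s)) (s ^ k) := by
    apply Nat.Coprime.pow_right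
    apply Nat.Coprime.prod_left
    intro i _
    exact (Nat.coprime_add_mul_right_left a s i).2 hcop
  have h1 : (∏ i ∈ Finset.range (k+1), (a + i * s)) ∣
      Nat.factorial k * ((Finset.range (k+1)).lcm (fun i => a + i * s)) := by
    have h2 := prodAP_dvd a s k hapos
    rw [show Nat.factorial k * s ^ k * ((Finset.range (k+1)).lcm (fun i => a + i * s))
        = s ^ k * (Nat.factorial k * ((Finset.range (k+1)).lcm (fun i => a + i * s))) by ring] at h2
    exact (Nat.Coprime.dvd_of_dvd_mul_left hcop2 h2)
  have hre : Nat.factorial k * d ^ k * (d * (Finset.range (k+1)).lcm (fun i => a + i * s))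
      = d ^ (k+1) * (Nat.factorial k * ((Finset.range (k+1)).lcm (fun i => a + i * s))) := by
    ring
  rw [hre]
  exact mul_dvd_mul_left _ h1
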